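/- Let ν_1, …, ν_{n+1} ∈ ℝ^{n+1} satisfy ⟨ν_i, ν_j⟩ ≤ 0 for all i ≠ j, and suppose ν_1, …, ν_n are linearly independent. Then every v ∈ span(ν_1, …, ν_n) with ⟨v, ν_j⟩ ≤ 0 for all j = 1, …, n satisfies ⟨v, ν_{n+1}⟩ ≥ 0. In particular, no point of the n-dimensional subspace P := span(ν_1, …, ν_n) lies in the open cone {x ∈ ℝ^{n+1} : ⟨x, ν_i⟩ < 0 for all i = 1, …, n+1}. -/

import Mathlib

open scoped RealInnerProductSpace

/-- Let `ν_1, …, ν_{n+1} ∈ ℝ^{n+1}` have pairwise non-positive inner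
products, with `ν_1, …, ν_n` linearly independent. Then every `v ∈ span(ν_1, …, ν_n)` with
`⟪v, ν_j⟫ ≤ 0` for `j ≤ n` satisfies `⟪v, ν_{n+1}⟫ ≥ 0`; in particular no point of
`span(ν_1, …, ν_n)` lies in the open cone `{x : ⟪x, ν_i⟫ < 0 ∀ i}`. -/
theorem stmt_14 (n : ℕ) (ν : Fin (n + 1) → EuclideanSpace ℝ (Fin (n + 1)))
    (hobtuse : ∀ i j, i ≠ j → ⟪ν i, ν j⟫ ≤ 0)
    (hindep : LinearIndependent ℝ (fun i : Fin n => ν i.castSucc)) :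
    (∀ v ∈ Submodule.span ℝ (Set.range fun i : Fin n => ν i.castSucc),
      (∀ i : Fin n, ⟪v, ν i.castSucc⟫ ≤ 0) → 0 ≤ ⟪v, ν (Fin.last n)⟫) ∧
    (∀ x ∈ Submodule.span ℝ (Set.range fun i : Fin n => ν i.castSucc),
      ¬ ∀ i : Fin (n + 1), ⟪x, ν i⟫ < 0) := by
  set f : Fin n → EuclideanSpace ℝ (Fin (n + 1)) := fun i => ν i.castSucc with hfdef
  have key : ∀ v ∈ Submodule.span ℝ (Set.range f),
      (∀ i : Fin n, ⟪v, f i⟫ ≤ 0) → 0 ≤ ⟪v, ν (Fin.last n)⟫ := by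
    intro v hv hneg
    obtain ⟨c, rfl⟩ := (Submodule.mem_span_range_iff_exists_fun ℝ).mp hv
    -- claim: all coefficients are ≤ 0
    have hc : ∀ i, c i ≤ 0 := by
      by_contra h
      push_neg at h
      obtain ⟨i₀, hi₀⟩ := h
      set P : Finset (Fin n) := Finset.univ.filter (fun i => 0 < c i) with hP
      have hi₀P : i₀ ∈ P := by simp [hP, hi₀]
      set w : EuclideanSpace ℝ (Fin (n + 1)) := ∑ i ∈ P, c i • f i with hw
      -- ⟪v, w⟫ ≤ 0
      have h1 : ⟪∑ i, c i • f i, w⟫ ≤ 0 := by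
        rw [hw, inner_sum]
        apply Finset.sum_nonpos
        intro j hj
        rw [real_inner_smul_right]
        have hcj : 0 < c j := (Finset.mem_filter.mp hj).2
        exact mul_nonpos_of_nonneg_of_nonpos hcj.le (hneg j)
      -- ⟪u, w⟫ ≥ 0 where u is the rest
      have h2 : 0 ≤ ⟪∑ i ∈ Pᶜ, c i • f i, w⟫ := by
        rw [hw, inner_sum]
        apply Finset.sum_nonneg
        intro j hj
        rw [sum_inner]
        apply Finset.sum_nonneg
        intro i hi
        rw [real_inner_smul_left, real_inner_smul_right]
        have hci : c i ≤ 0 := by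
          have := Finset.mem_compl.mp hi
          simp [hP] at this
          exact this
        have hcj : 0 < c j := (Finset.mem_filter.mp hj).2
        have hij : i ≠ j := by
          rintro rfl
          exact absurd hcj (not_lt.mpr hci)
        have hinner : ⟪f i, f j⟫ ≤ 0 := by
          apply hobtuse
          simpa [Fin.ext_iff] using (fun h' : (i : ℕ) = j => hij (Fin.ext h'))
        nlinarith [mul_nonpos_of_nonneg_of_nonpos hcj.le hinner]
      -- conclude ⟪w, w⟫ ≤ 0 hence w = 0
      have hsplit : (∑ i, c i • f i) = w + ∑ i ∈ Pᶜ, c i • f i := by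
        rw [hw, ← Finset.sum_add_sum_compl P (fun i => c i • f i)]
      have hww : ⟪w, w⟫ ≤ 0 := by
        have : ⟪w, w⟫ + ⟪∑ i ∈ Pᶜ, c i • f i, w⟫ ≤ 0 := by
          calc ⟪w, w⟫ + ⟪∑ i ∈ Pᶜ, c i • f i, w⟫
              = ⟪∑ i, c i • f i, w⟫ := by rw [hsplit, inner_add_left]
            _ ≤ 0 := h1
        linarith
      have hw0 : w = 0 := by
        have := real_inner_self_nonpos (x := w)
        exact this.mp hww
      -- linear independence contradiction
      have hall0 : ∀ i, (if i ∈ P then c i else 0) = 0 := by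
        apply Fintype.linearIndependent_iff.mp hindep
        show (∑ i, (if i ∈ P then c i else 0) • f i) = 0
        calc (∑ i, (if i ∈ P then c i else 0) • f i)
            = ∑ i, (if i ∈ P then c i • f i else 0) := by
              apply Finset.sum_congr rfl
              intro i _
              split <;> simp
          _ = ∑ i ∈ P, c i • f i := by rw [Finset.sum_ite_mem, Finset.univ_inter]
          _ = 0 := by rw [← hw, hw0]
      have := hall0 i₀
      rw [if_pos hi₀P] at this
      exact absurd hi₀ (by rw [this]; exact lt_irrefl 0)
    -- now conclude
    rw [sum_inner]
    apply Finset.sum_nonneg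
    intro i _
    rw [real_inner_smul_left]
    have hne : i.castSucc ≠ Fin.last n := (Fin.castSucc_lt_last i).ne
    nlinarith [hobtuse i.castSucc (Fin.last n) hne, hc i]
  refine ⟨key, ?_⟩
  intro x hx hall
  have h1 := key x hx (fun i => (hall i.castSucc).le)
  exact absurd (hall (Fin.last n)) (not_lt.mpr h1)
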